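/- arXiv:0905.4870 — 3 statements merged into one kernel-verified Lean document; each statement's English description precedes it below -/
import Mathlib

section
/- (i) The set I(χ,M) is a W-stable subset of I: if i ∈ I(χ,M) and σ ∈ W, then σi ∈ I(χ,M). (ii) If in addition K is an integral domain and |W| is invertible in K, then a_χ(e_i) = 0 for every i ∈ I₀(χ,M). -/
noncomputable section

/-- The monomial action of `σ ∈ W` on the free module `I →₀ K`,
determined by `σ • e_i = γ_i(σ) • e_{σ i}`. -/
def monAct {K : Type*} [CommRing K] {W : Type*} [Group W] {I : Type*} [MulAction W I]
    (γ : I → W → Kˣ) (σ : W) : (I →₀ K) →ₗ[K] (I →₀ K) :=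
  Finsupp.lsum K fun i => ((γ i σ : Kˣ) : K) • Finsupp.lsingle (σ • i)

/-- The averaging operator
`a_χ = |W|⁻¹ Σ_{σ ∈ W} χ(σ)⁻¹ σ`, where `u` is the unit `|W|` of `K`. -/
def aChi {K : Type*} [CommRing K] {W : Type*} [Group W] [Fintype W] {I : Type*}
    [MulAction W I] (γ : I → W → Kˣ) (χ : W →* Kˣ) (u : Kˣ) :
    (I →₀ K) →ₗ[K] (I →₀ K) :=
  ((u⁻¹ : Kˣ) : K) • ∑ σ : W, (((χ σ)⁻¹ : Kˣ) : K) • monAct γ σ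

/-- The set `I(χ,M)`: those `i ∈ I` such that `γ_i = χ` on the stabilizer `W_i`. -/
def Ichi {K : Type*} [CommRing K] {W : Type*} [Group W] {I : Type*} [MulAction W I]
    (γ : I → W → Kˣ) (χ : W →* Kˣ) : Set I :=
  {i | ∀ σ : W, σ • i = i → γ i σ = χ σ}

/-- The `W`-submodule `_χM` of `M = I →₀ K` generated by the elements
`χ(σ) z − σ z` (as a `K`-submodule; the generating set is `W`-stable
up to such differences, so this agrees with the `W`-submodule generated). -/
def chiDiffSub {K : Type*} [CommRing K] {W : Type*} [Group W] {I : Type*}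
    [MulAction W I] (γ : I → W → Kˣ) (χ : W →* Kˣ) : Submodule K (I →₀ K) :=
  Submodule.span K {x | ∃ (σ : W) (z : I →₀ K),
    x = ((χ σ : Kˣ) : K) • z - monAct γ σ z}

/-- The submodule `M_χ = {z ∈ M | σ z = χ(σ) z for all σ ∈ W}`. -/
def chiFixSub {K : Type*} [CommRing K] {W : Type*} [Group W] {I : Type*}
    [MulAction W I] (γ : I → W → Kˣ) (χ : W →* Kˣ) : Submodule K (I →₀ K) where
  carrier := {z | ∀ σ : W, monAct γ σ z = ((χ σ : Kˣ) : K) • z}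
  add_mem' := by
    intro a b ha hb σ
    rw [map_add, ha σ, hb σ, smul_add]
  zero_mem' := by
    intro σ
    rw [map_zero, smul_zero]
  smul_mem' := by
    intro c a ha σ
    rw [map_smul, ha σ, smul_comm]

/-- Lemma II.2. (i) `I(χ,M)` is `W`-stable;
(ii) if `K` is an integral domain and `|W| ∈ U(K)`, then `a_χ(e_i) = 0`
for every `i ∈ I₀(χ,M) = I ∖ I(χ,M)`. -/
theorem Ichi_stable_and_aChi_vanishes {K : Type*} [CommRing K]
    {W : Type*} [Group W] [Fintype W] {I : Type*} [MulAction W I]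
    (γ : I → W → Kˣ) (hγ : ∀ (i : I) (σ τ : W), γ i (σ * τ) = γ (τ • i) σ * γ i τ)
    (χ : W →* Kˣ) :
    (∀ i ∈ Ichi γ χ, ∀ σ : W, σ • i ∈ Ichi γ χ) ∧
    (IsDomain K → ∀ u : Kˣ, ((u : Kˣ) : K) = (Fintype.card W : K) →
      ∀ i ∉ Ichi γ χ, aChi γ χ u (Finsupp.single i 1) = 0) := by
  have hone : ∀ i : I, γ i 1 = 1 := by
    intro i
    have h := hγ i 1 1
    simp only [one_smul, mul_one] at h
    exact left_eq_mul.mp h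
  constructor
  · intro i hi σ τ hτ
    have hfix : (σ⁻¹ * (τ * σ)) • i = i := by
      simp [mul_smul, hτ]
    have h1 : γ i (σ⁻¹ * (τ * σ)) = χ (σ⁻¹ * (τ * σ)) := hi _ hfix
    rw [hγ i σ⁻¹ (τ * σ), hγ i τ σ] at h1
    have hts : (τ * σ) • i = σ • i := by rw [mul_smul, hτ]
    rw [hts] at h1
    have h2 : γ (σ • i) σ⁻¹ * γ i σ = 1 := by
      rw [← hγ i σ⁻¹ σ, inv_mul_cancel, hone]
    have hχ : χ (σ⁻¹ * (τ * σ)) = χ τ := by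
      simp [map_mul, map_inv, mul_comm, mul_left_comm]
    rw [hχ] at h1
    calc γ (σ • i) τ = γ (σ • i) τ * (γ (σ • i) σ⁻¹ * γ i σ) := by rw [h2, mul_one]
      _ = γ (σ • i) σ⁻¹ * (γ (σ • i) τ * γ i σ) := mul_left_comm _ _ _
      _ = χ τ := h1
  · intro hdom u hu i hi
    classical
    simp only [Ichi, Set.mem_setOf_eq, not_forall] at hi
    obtain ⟨τ, hτi, hτne⟩ := hi
    -- the key coefficient computation
    have key : ∀ j : I,
        (∑ σ : W, if σ • i = j then (((χ σ)⁻¹ : Kˣ) : K) * ((γ i σ : Kˣ) : K) else 0) = 0 := by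
      intro j
      set r : K := (((χ τ)⁻¹ : Kˣ) : K) * ((γ i τ : Kˣ) : K) with hr
      set S : K := ∑ σ : W, if σ • i = j then (((χ σ)⁻¹ : Kˣ) : K) * ((γ i σ : Kˣ) : K) else 0
        with hS
      have hc : ∀ σ : W, (((χ (σ * τ))⁻¹ : Kˣ) : K) * ((γ i (σ * τ) : Kˣ) : K)
          = r * ((((χ σ)⁻¹ : Kˣ) : K) * ((γ i σ : Kˣ) : K)) := by
        intro σ
        rw [hγ i σ τ, hτi, map_mul, hr, mul_inv]
        push_cast
        ring
      have hinv : τ⁻¹ • i = i := by rw [inv_smul_eq_iff, hτi]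
      have hbij : S = r * S := by
        rw [hS, Finset.mul_sum]
        refine Fintype.sum_equiv (Equiv.mulRight τ⁻¹) _ _ ?_
        intro σ
        simp only [Equiv.coe_mulRight]
        have hsm : (σ * τ⁻¹) • i = σ • i := by rw [mul_smul, hinv]
        simp only [hsm]
        by_cases h : σ • i = j
        · rw [if_pos h, if_pos h, ← hc (σ * τ⁻¹), inv_mul_cancel_right]
        · rw [if_neg h, if_neg h, mul_zero]
      have hr1 : r ≠ 1 := by
        intro h
        apply hτne
        have : ((χ τ)⁻¹ * γ i τ : Kˣ) = 1 := Units.ext (by push_cast; exact h)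
        rw [inv_mul_eq_one] at this
        exact this.symm
      have : (r - 1) * S = 0 := by rw [sub_mul, one_mul, ← hbij, sub_self]
      rcases mul_eq_zero.mp this with h | h
      · exact absurd (by linear_combination h : r = 1) hr1
      · exact h
    have hm : ∀ σ : W, monAct γ σ (Finsupp.single i (1:K))
        = ((γ i σ : Kˣ) : K) • Finsupp.single (σ • i) 1 := by
      intro σ
      simp [monAct]
    have hexp : aChi γ χ u (Finsupp.single i (1:K))
        = ((u⁻¹ : Kˣ) : K) • ∑ σ : W,
            (((χ σ)⁻¹ : Kˣ) : K) • (((γ i σ : Kˣ) : K) • Finsupp.single (σ • i) (1:K)) := by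
      simp [aChi, LinearMap.sum_apply, hm]
    rw [hexp]
    rw [smul_eq_zero]
    right
    ext j
    rw [Finsupp.finset_sum_apply, Finsupp.coe_zero, Pi.zero_apply]
    rw [← key j]
    refine Finset.sum_congr rfl fun σ _ => ?_
    rw [Finsupp.smul_apply, Finsupp.smul_apply, Finsupp.single_apply]
    by_cases h : σ • i = j
    · simp [h]
    · simp [h]
end
end

section
/- Assume K is an integral domain and |W| is invertible in K. Let _χM denote the W-submodule of M generated by all elements χ(σ)z − σz (σ ∈ W, z ∈ M). Then the union of the two families (e_i − χ(σ)⁻¹γ_i(σ)·e_{σi}), for i ∈ I*, σ ∈ W^{(i)} with σ ∉ W_i, and (e_i), for i ∈ J₀(χ,M), is a basis of the K-module _χM. -/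
noncomputable section

/-- Theorem II.6 (i). If `K` is an integral domain and
`|W| ∈ U(K)`, then the union of the families
`e_i − χ(σ)⁻¹ γ_i(σ) e_{σ i}` (for `i ∈ I*`, `σ ∈ W^{(i)}`, `σ ∉ W_i`) and
`e_i` (for `i ∈ J₀(χ,M) = I* ∖ I(χ,M)`) is a basis of `_χM`. -/
theorem basis_of_chiDiffSub {K : Type*} [CommRing K] [IsDomain K]
    {W : Type*} [Group W] [Fintype W] {I : Type*} [MulAction W I]
    (hcard : IsUnit ((Fintype.card W : K)))
    (γ : I → W → Kˣ) (hγ : ∀ (i : I) (σ τ : W), γ i (σ * τ) = γ (τ • i) σ * γ i τ)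
    (χ : W →* Kˣ)
    (Istar : Set I)
    (hIstar : ∀ i : I, ∃! j, j ∈ Istar ∧ j ∈ MulAction.orbit W i)
    (rep : I → Set W)
    (hrep : ∀ i : I, ∀ σ : W, ∃! τ, τ ∈ rep i ∧ τ⁻¹ * σ ∈ MulAction.stabilizer W i)
    (v : ({p : I × W // p.1 ∈ Istar ∧ p.2 ∈ rep p.1 ∧ p.2 ∉ MulAction.stabilizer W p.1}
          ⊕ {i : I // i ∈ Istar ∧ i ∉ Ichi γ χ}) → (I →₀ K))
    (hv : v = Sum.elim
      (fun p => Finsupp.single p.1.1 (1 : K) -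
        ((((χ p.1.2)⁻¹ * γ p.1.1 p.1.2 : Kˣ)) : K) • Finsupp.single (p.1.2 • p.1.1) 1)
      (fun i => Finsupp.single i.1 1)) :
    LinearIndependent K v ∧ Submodule.span K (Set.range v) = chiDiffSub γ χ := by
  subst hv
  set v := Sum.elim
      (fun p : {p : I × W // p.1 ∈ Istar ∧ p.2 ∈ rep p.1 ∧ p.2 ∉ MulAction.stabilizer W p.1} =>
        Finsupp.single p.1.1 (1 : K) -
        ((((χ p.1.2)⁻¹ * γ p.1.1 p.1.2 : Kˣ)) : K) • Finsupp.single (p.1.2 • p.1.1) 1)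
      (fun i : {i : I // i ∈ Istar ∧ i ∉ Ichi γ χ} => Finsupp.single i.1 1) with hv
  have hmon : ∀ (σ : W) (j : I) (c : K),
      monAct γ σ (Finsupp.single j c) = ((γ j σ : Kˣ) : K) • Finsupp.single (σ • j) c := by
    intro σ j c
    rw [monAct, Finsupp.lsum_single]
    simp
  have hI1 : ∀ {i i' : I}, i ∈ Istar → i' ∈ Istar → i' ∈ MulAction.orbit W i → i = i' := by
    intro i i' hi hi' ho
    obtain ⟨k, -, hk⟩ := hIstar i
    have h1 := hk i ⟨hi, MulAction.mem_orbit_self i⟩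
    have h2 := hk i' ⟨hi', ho⟩
    rw [h1, h2]
  have hR1 : ∀ (i : I) (τ τ' : W), τ ∈ rep i → τ' ∈ rep i → τ • i = τ' • i → τ = τ' := by
    intro i τ τ' hτ hτ' hs
    obtain ⟨t, -, ht⟩ := hrep i τ
    have h1 := ht τ ⟨hτ, by simp⟩
    have h2 := ht τ' ⟨hτ', by
      simp only [MulAction.mem_stabilizer_iff, mul_smul, hs, inv_smul_smul]⟩
    rw [h1, h2]
  have hNS : ∀ {i : I}, i ∈ Istar → ∀ τ : W, τ • i ≠ i → τ • i ∉ Istar := by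
    intro i hi τ hne hmem
    exact hne (hI1 hi hmem ⟨τ, rfl⟩).symm
  constructor
  · -- linear independence
    rw [linearIndependent_iff']
    intro s f hsum
    have happ : ∀ k : I, ∑ x ∈ s, f x * (v x) k = 0 := by
      intro k
      have := congrArg (fun z : I →₀ K => z k) hsum
      simpa [Finsupp.finset_sum_apply, Finsupp.smul_apply] using this
    -- step 1 : pair coefficients vanish
    have hmove : ∀ p : {p : I × W // p.1 ∈ Istar ∧ p.2 ∈ rep p.1 ∧ p.2 ∉ MulAction.stabilizer W p.1}, p.1.2 • p.1.1 ≠ p.1.1 ∧ p.1.2 • p.1.1 ∉ Istar := by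
      intro p
      have hne : p.1.2 • p.1.1 ≠ p.1.1 := fun h => p.2.2.2 h
      exact ⟨hne, hNS p.2.1 _ hne⟩
    have hstep1 : ∀ p : {p : I × W // p.1 ∈ Istar ∧ p.2 ∈ rep p.1 ∧ p.2 ∉ MulAction.stabilizer W p.1}, Sum.inl p ∈ s → f (Sum.inl p) = 0 := by
      intro p hp
      have h := happ (p.1.2 • p.1.1)
      rw [Finset.sum_eq_single_of_mem (Sum.inl p) hp] at h
      · have hc : (v (Sum.inl p)) (p.1.2 • p.1.1)
            = -(((χ p.1.2)⁻¹ * γ p.1.1 p.1.2 : Kˣ) : K) := by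
          have h1 : p.1.1 ≠ p.1.2 • p.1.1 := fun hh => (hmove p).1 hh.symm
          simp only [hv, Sum.elim_inl, Finsupp.sub_apply, Finsupp.smul_apply,
            Finsupp.single_eq_of_ne' h1, Finsupp.single_eq_same]
          simp
        rw [hc] at h
        have : f (Sum.inl p) * -(((χ p.1.2)⁻¹ * γ p.1.1 p.1.2 : Kˣ) : K) = 0 := h
        rcases mul_eq_zero.mp this with h0 | h0
        · exact h0
        · exact absurd h0 (by simpa using (((χ p.1.2)⁻¹ * γ p.1.1 p.1.2 : Kˣ)).ne_zero)
      · intro b hb hne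
        have hz : (v b) (p.1.2 • p.1.1) = 0 := by
          rcases b with q | j
          · -- pair case
            have h1 : q.1.1 ≠ p.1.2 • p.1.1 := fun hh => (hmove p).2 (hh ▸ q.2.1)
            have h2 : q.1.2 • q.1.1 ≠ p.1.2 • p.1.1 := by
              intro hh
              apply hne
              have hi : q.1.1 = p.1.1 := by
                apply hI1 q.2.1 p.2.1
                exact ⟨p.1.2⁻¹ * q.1.2, by show (p.1.2⁻¹ * q.1.2) • q.1.1 = p.1.1; rw [mul_smul, hh, inv_smul_smul]⟩
              have hτ : q.1.2 = p.1.2 := by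
                apply hR1 p.1.1 q.1.2 p.1.2 (hi ▸ q.2.2.1) p.2.2.1
                rw [← hi] at hh ⊢
                exact hh
              congr 1
              exact Subtype.ext (Prod.ext hi hτ)
            simp only [hv, Sum.elim_inl, Finsupp.sub_apply, Finsupp.smul_apply,
              Finsupp.single_eq_of_ne' h1, Finsupp.single_eq_of_ne' h2]
            simp
          · have h1 : j.1 ≠ p.1.2 • p.1.1 := fun hh => (hmove p).2 (hh ▸ j.2.1)
            simp [hv, Finsupp.single_eq_of_ne' h1]
        rw [hz, mul_zero]
    -- step 2
    intro x hx
    rcases x with p | j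
    · exact hstep1 p hx
    · have h := happ j.1
      rw [Finset.sum_eq_single_of_mem (Sum.inr j) hx] at h
      · simpa [hv] using h
      · intro b hb hne
        rcases b with q | j'
        · rw [hstep1 q hb, zero_mul]
        · have h1 : j'.1 ≠ j.1 := fun hh => hne (by exact congrArg Sum.inr (Subtype.ext hh))
          simp [hv, Finsupp.single_eq_of_ne' h1]
  · -- span equality
    set V := Submodule.span K (Set.range v) with hV
    -- generators of chiDiffSub
    have hgen : ∀ (j : I) (σ : W), ((χ σ : Kˣ) : K) • Finsupp.single j (1:K)
        - ((γ j σ : Kˣ) : K) • Finsupp.single (σ • j) (1:K) ∈ chiDiffSub γ χ := by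
      intro j σ
      apply Submodule.subset_span
      exact ⟨σ, Finsupp.single j 1, by rw [hmon]⟩
    -- single i 1 ∈ chiDiffSub for i ∉ Ichi
    have heJ0 : ∀ i : I, i ∉ Ichi γ χ → Finsupp.single i (1:K) ∈ chiDiffSub γ χ := by
      intro i hIc
      obtain ⟨σ₀, hσ₀s, hσ₀⟩ : ∃ σ : W, σ • i = i ∧ γ i σ ≠ χ σ := by
        by_contra h
        push_neg at h
        exact hIc fun σ hσ => h σ hσ
      set H := MulAction.stabilizer W i with hH
      set ψ : H → Kˣ := fun ρ => (χ (ρ : W))⁻¹ * γ i (ρ : W) with hψ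
      have hψmul : ∀ ρ ρ' : H, ψ (ρ * ρ') = ψ ρ * ψ ρ' := by
        intro ρ ρ'
        have hst : (ρ' : W) • i = i := ρ'.2
        have h1 : γ i ((ρ : W) * (ρ' : W)) = γ i (ρ : W) * γ i (ρ' : W) := by
          rw [hγ i (ρ : W) (ρ' : W), hst]
        simp only [hψ, Subgroup.coe_mul, map_mul, mul_inv, h1]
        exact mul_mul_mul_comm _ _ _ _
      letI : Fintype H := Fintype.ofFinite _
      set S : K := ∑ ρ : H, ((ψ ρ : Kˣ) : K) with hS
      have hSzero : S = 0 := by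
        set ρ₀ : H := ⟨σ₀, hσ₀s⟩ with hρ₀
        have hmulS : ((ψ ρ₀ : Kˣ) : K) * S = S := by
          rw [hS, Finset.mul_sum]
          refine Fintype.sum_equiv (Equiv.mulLeft ρ₀) _ _ ?_
          intro ρ
          rw [← Units.val_mul, ← hψmul]
          rfl
        have hne1 : ((ψ ρ₀ : Kˣ) : K) ≠ 1 := by
          intro h
          apply hσ₀
          have : ψ ρ₀ = 1 := Units.ext (by simpa using h)
          have h2 : (χ σ₀)⁻¹ * γ i σ₀ = 1 := this
          rw [inv_mul_eq_one] at h2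
          exact h2.symm
        have : (((ψ ρ₀ : Kˣ) : K) - 1) * S = 0 := by rw [sub_mul, one_mul, hmulS, sub_self]
        rcases mul_eq_zero.mp this with h | h
        · exact absurd (sub_eq_zero.mp h) hne1
        · exact h
      -- the sum of generators over the stabilizer
      have hsum : (∑ ρ : H, ((χ (ρ:W))⁻¹ : Kˣ) •
          (((χ (ρ:W) : Kˣ) : K) • Finsupp.single i (1:K)
            - ((γ i (ρ:W) : Kˣ) : K) • Finsupp.single ((ρ:W) • i) (1:K)))
          = ((Fintype.card H : K) - S) • Finsupp.single i (1:K) := by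
        have : ∀ ρ : H, ((χ (ρ:W))⁻¹ : Kˣ) •
            (((χ (ρ:W) : Kˣ) : K) • Finsupp.single i (1:K)
              - ((γ i (ρ:W) : Kˣ) : K) • Finsupp.single ((ρ:W) • i) (1:K))
            = (1 - ((ψ ρ : Kˣ) : K)) • Finsupp.single i (1:K) := by
          intro ρ
          have hst : (ρ : W) • i = i := ρ.2
          rw [hst, Units.smul_def, smul_sub, smul_smul, smul_smul,
            ← Units.val_mul, ← Units.val_mul, inv_mul_cancel, Units.val_one, sub_smul, one_smul]
        rw [Finset.sum_congr rfl (fun ρ _ => this ρ), ← Finset.sum_smul]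
        congr 1
        rw [Finset.sum_sub_distrib, Finset.sum_const, Finset.card_univ, nsmul_eq_mul, mul_one, hS]
      have hmem : ((Fintype.card H : K) - S) • Finsupp.single i (1:K) ∈ chiDiffSub γ χ := by
        rw [← hsum]
        apply Submodule.sum_mem
        intro ρ _
        exact Submodule.smul_mem _ _ (by simpa using hgen i (ρ : W))
      rw [hSzero, sub_zero] at hmem
      have hHunit : IsUnit ((Fintype.card H : K)) := by
        have h1 : Nat.card H * H.index = Nat.card W := Subgroup.card_mul_index H
        rw [Nat.card_eq_fintype_card, Nat.card_eq_fintype_card] at h1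
        apply isUnit_of_mul_isUnit_left (y := (H.index : K))
        rw [← Nat.cast_mul, h1]
        exact hcard
      obtain ⟨u, hu⟩ := hHunit
      have : ((u⁻¹ : Kˣ) : K) • ((Fintype.card H : K) • Finsupp.single i (1:K))
          = Finsupp.single i (1:K) := by
        rw [smul_smul, ← hu, ← Units.val_mul, inv_mul_cancel, Units.val_one, one_smul]
      rw [← this]
      exact Submodule.smul_mem _ _ hmem
    -- direction : V ≤ chiDiffSub
    have hle1 : V ≤ chiDiffSub γ χ := by
      rw [hV, Submodule.span_le]
      rintro x ⟨y, rfl⟩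
      rcases y with p | j
      · have heq : v (Sum.inl p) = (((χ p.1.2)⁻¹ : Kˣ) : K) •
            (((χ p.1.2 : Kˣ) : K) • Finsupp.single p.1.1 (1:K)
              - ((γ p.1.1 p.1.2 : Kˣ) : K) • Finsupp.single (p.1.2 • p.1.1) (1:K)) := by
          rw [hv]
          simp only [Sum.elim_inl]
          rw [smul_sub, smul_smul, smul_smul, ← Units.val_mul, ← Units.val_mul,
            inv_mul_cancel, Units.val_one, one_smul]
        rw [heq]
        exact Submodule.smul_mem _ _ (hgen _ _)
      · simpa [hv] using heJ0 j.1 j.2.2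
    -- reduction lemma : e_{τ•k} ≡ u_τ e_k  mod V
    have hred : ∀ k : I, k ∈ Istar → ∀ τ : W, τ ∈ rep k →
        Finsupp.single (τ • k) (1:K)
          - ((χ τ * (γ k τ)⁻¹ : Kˣ) : K) • Finsupp.single k (1:K) ∈ V := by
      intro k hk τ hτ
      by_cases hst : τ • k = k
      · rw [hst]
        by_cases hIc : k ∈ Ichi γ χ
        · have hu1 : (χ τ * (γ k τ)⁻¹ : Kˣ) = 1 := by
            rw [hIc τ hst]; group
          rw [hu1, Units.val_one, one_smul, sub_self]
          exact Submodule.zero_mem _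
        · have he : Finsupp.single k (1:K) ∈ V :=
            Submodule.subset_span ⟨Sum.inr ⟨k, hk, hIc⟩, rfl⟩
          exact Submodule.sub_mem _ he (Submodule.smul_mem _ _ he)
      · have hvmem : Finsupp.single k (1:K)
            - (((χ τ)⁻¹ * γ k τ : Kˣ) : K) • Finsupp.single (τ • k) (1:K) ∈ V :=
          Submodule.subset_span ⟨Sum.inl ⟨(k, τ), hk, hτ, fun h => hst h⟩, rfl⟩
        have heq : Finsupp.single (τ • k) (1:K)
            - ((χ τ * (γ k τ)⁻¹ : Kˣ) : K) • Finsupp.single k (1:K)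
            = (-((χ τ * (γ k τ)⁻¹ : Kˣ) : K)) • (Finsupp.single k (1:K)
              - (((χ τ)⁻¹ * γ k τ : Kˣ) : K) • Finsupp.single (τ • k) (1:K)) := by
          have h1 : ((χ τ : Kˣ) : K) * (((χ τ)⁻¹ : Kˣ) : K) = 1 := by
            rw [← Units.val_mul, mul_inv_cancel, Units.val_one]
          have h2 : ((γ k τ : Kˣ) : K) * (((γ k τ)⁻¹ : Kˣ) : K) = 1 := by
            rw [← Units.val_mul, mul_inv_cancel, Units.val_one]
          match_scalars <;>
          first
            | ring1
            | linear_combination (-(((γ k τ : Kˣ) : K) * (((γ k τ)⁻¹ : Kˣ) : K))) * h1 - h2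
            | linear_combination (-(((χ τ : Kˣ) : K) * (((χ τ)⁻¹ : Kˣ) : K))) * h2 - h1
            | linear_combination -h1 - h2
            | linear_combination -h1
            | linear_combination -h2
        rw [heq]
        exact Submodule.smul_mem _ _ hvmem
    -- every generator lies in V
    have hginV : ∀ (j : I) (σ : W), ((χ σ : Kˣ) : K) • Finsupp.single j (1:K)
        - ((γ j σ : Kˣ) : K) • Finsupp.single (σ • j) (1:K) ∈ V := by
      intro j σ
      obtain ⟨k, ⟨hk, w, hw⟩, -⟩ := hIstar j
      have hj : w⁻¹ • k = j := by rw [← hw, inv_smul_smul]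
      obtain ⟨τ, ⟨hτ, hτs⟩, -⟩ := hrep k w⁻¹
      have hτk : τ • k = j := by
        have h1 : (τ⁻¹ * w⁻¹) • k = k := hτs
        rw [mul_smul] at h1
        have h2 : τ • τ⁻¹ • w⁻¹ • k = τ • k := congrArg (τ • ·) h1
        rw [smul_inv_smul] at h2
        exact h2.symm.trans hj
      obtain ⟨τ', ⟨hτ', hτ's⟩, -⟩ := hrep k (σ * τ)
      set ρ : W := τ'⁻¹ * (σ * τ) with hρ
      have hρs : ρ • k = k := hτ's
      have hστ : σ * τ = τ' * ρ := by rw [hρ]; group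
      have hτ'k : τ' • k = σ • j := by
        calc τ' • k = τ' • (ρ • k) := by rw [hρs]
        _ = (τ' * ρ) • k := (mul_smul _ _ _).symm
        _ = (σ * τ) • k := by rw [← hστ]
        _ = σ • (τ • k) := mul_smul _ _ _
        _ = σ • j := by rw [hτk]
      have hA := hred k hk τ hτ
      have hB := hred k hk τ' hτ'
      rw [hτk] at hA
      rw [hτ'k] at hB
      by_cases hIc : k ∈ Ichi γ χ
      · -- coefficient identity
        have e1 : γ j σ * γ k τ = γ k τ' * χ ρ := by
          have h1 := hγ k σ τ
          rw [hτk] at h1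
          have h2 := hγ k τ' ρ
          rw [hρs, hIc ρ hρs] at h2
          rw [← h1, ← h2, hστ]
        have e2 : χ σ * χ τ = χ τ' * χ ρ := by rw [← map_mul, ← map_mul, hστ]
        have e1K : ((γ j σ : Kˣ) : K) * ((γ k τ : Kˣ) : K)
            = ((γ k τ' : Kˣ) : K) * ((χ ρ : Kˣ) : K) := by
          rw [← Units.val_mul, ← Units.val_mul, e1]
        have e2K : ((χ σ : Kˣ) : K) * ((χ τ : Kˣ) : K)
            = ((χ τ' : Kˣ) : K) * ((χ ρ : Kˣ) : K) := by
          rw [← Units.val_mul, ← Units.val_mul, e2]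
        have hinvτ : (((γ k τ)⁻¹ : Kˣ) : K) * ((γ k τ : Kˣ) : K) = 1 := by
          rw [← Units.val_mul, inv_mul_cancel, Units.val_one]
        have hinvτ' : (((γ k τ')⁻¹ : Kˣ) : K) * ((γ k τ' : Kˣ) : K) = 1 := by
          rw [← Units.val_mul, inv_mul_cancel, Units.val_one]
        have keyK : ((χ σ : Kˣ) : K) * ((χ τ : Kˣ) : K) * ((γ k τ' : Kˣ) : K)
            = ((γ j σ : Kˣ) : K) * ((χ τ' : Kˣ) : K) * ((γ k τ : Kˣ) : K) := by
          linear_combination ((γ k τ' : Kˣ) : K) * e2K - ((χ τ' : Kˣ) : K) * e1K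
        have hcoeffK : ((χ σ : Kˣ) : K) * (((χ τ : Kˣ) : K) * (((γ k τ)⁻¹ : Kˣ) : K))
            = ((γ j σ : Kˣ) : K) * (((χ τ' : Kˣ) : K) * (((γ k τ')⁻¹ : Kˣ) : K)) := by
          apply mul_right_cancel₀ (b := ((γ k τ : Kˣ) : K) * ((γ k τ' : Kˣ) : K))
            (mul_ne_zero (γ k τ).ne_zero (γ k τ').ne_zero)
          linear_combination (((χ σ : Kˣ) : K) * ((χ τ : Kˣ) : K) * ((γ k τ' : Kˣ) : K)) * hinvτ
            - (((γ j σ : Kˣ) : K) * ((χ τ' : Kˣ) : K) * ((γ k τ : Kˣ) : K)) * hinvτ' + keyK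
        have heq : ((χ σ : Kˣ) : K) • Finsupp.single j (1:K)
            - ((γ j σ : Kˣ) : K) • Finsupp.single (σ • j) (1:K)
            = ((χ σ : Kˣ) : K) • (Finsupp.single j (1:K)
                - ((χ τ * (γ k τ)⁻¹ : Kˣ) : K) • Finsupp.single k (1:K))
              - ((γ j σ : Kˣ) : K) • (Finsupp.single (σ • j) (1:K)
                - ((χ τ' * (γ k τ')⁻¹ : Kˣ) : K) • Finsupp.single k (1:K)) := by
          match_scalars <;> first | ring1 | linear_combination hcoeffK | linear_combination -hcoeffK
        rw [heq]
        exact Submodule.sub_mem _ (Submodule.smul_mem _ _ hA) (Submodule.smul_mem _ _ hB)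
      · have hek : Finsupp.single k (1:K) ∈ V :=
          Submodule.subset_span ⟨Sum.inr ⟨k, hk, hIc⟩, rfl⟩
        have heq : ((χ σ : Kˣ) : K) • Finsupp.single j (1:K)
            - ((γ j σ : Kˣ) : K) • Finsupp.single (σ • j) (1:K)
            = (((χ σ : Kˣ) : K) • (Finsupp.single j (1:K)
                - ((χ τ * (γ k τ)⁻¹ : Kˣ) : K) • Finsupp.single k (1:K))
              - ((γ j σ : Kˣ) : K) • (Finsupp.single (σ • j) (1:K)
                - ((χ τ' * (γ k τ')⁻¹ : Kˣ) : K) • Finsupp.single k (1:K)))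
            + (((χ σ : Kˣ) : K) * ((χ τ * (γ k τ)⁻¹ : Kˣ) : K)
                - ((γ j σ : Kˣ) : K) * ((χ τ' * (γ k τ')⁻¹ : Kˣ) : K))
              • Finsupp.single k (1:K) := by
          match_scalars <;> ring
        rw [heq]
        exact Submodule.add_mem _
          (Submodule.sub_mem _ (Submodule.smul_mem _ _ hA) (Submodule.smul_mem _ _ hB))
          (Submodule.smul_mem _ _ hek)
    -- direction : chiDiffSub ≤ V
    have hle2 : chiDiffSub γ χ ≤ V := by
      rw [chiDiffSub, Submodule.span_le]
      rintro x ⟨σ, z, rfl⟩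
      induction z using Finsupp.induction_linear with
      | zero => simp
      | add f g hf hg =>
        have : ((χ σ : Kˣ) : K) • (f + g) - monAct γ σ (f + g)
            = (((χ σ : Kˣ) : K) • f - monAct γ σ f) + (((χ σ : Kˣ) : K) • g - monAct γ σ g) := by
          rw [map_add, smul_add]; abel
        rw [this]
        exact Submodule.add_mem _ hf hg
      | single j c =>
        rw [hmon]
        have hsing : Finsupp.single j c = c • Finsupp.single j (1:K) := by
          rw [Finsupp.smul_single', mul_one]
        have hsing2 : Finsupp.single (σ • j) c = c • Finsupp.single (σ • j) (1:K) := by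
          rw [Finsupp.smul_single', mul_one]
        rw [hsing, hsing2]
        have heq : ((χ σ : Kˣ) : K) • (c • Finsupp.single j (1:K))
            - ((γ j σ : Kˣ) : K) • (c • Finsupp.single (σ • j) (1:K))
            = c • (((χ σ : Kˣ) : K) • Finsupp.single j (1:K)
              - ((γ j σ : Kˣ) : K) • Finsupp.single (σ • j) (1:K)) := by
          match_scalars <;> ring
        rw [heq]
        exact Submodule.smul_mem _ _ (hginV j σ)
    exact le_antisymm hle1 hle2
end
end

section
/- Assume K is an integral domain and |W| is invertible in K. Then: (ii) the family (a_χ(e_j))_{j∈J(χ,M)} is a basis of the K-module M_χ = {z ∈ M : σz = χ(σ)z for all σ ∈ W}; (iii) the family of residue classes (e_j mod _χM)_{j∈J(χ,M)} is a basis of the quotient K-module M/_χM, where _χM is the W-submodule of M generated by all elements χ(σ)z − σz (σ ∈ W, z ∈ M). -/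
noncomputable section
set_option linter.unusedSectionVars false

section aux
variable {K : Type*} [CommRing K] {W : Type*} [Group W] [Fintype W] {I : Type*} [MulAction W I]
  (γ : I → W → Kˣ) (χ : W →* Kˣ) (u : Kˣ)

lemma monAct_single (σ : W) (i : I) (c : K) :
    monAct γ σ (Finsupp.single i c) = Finsupp.single (σ • i) (((γ i σ : Kˣ) : K) * c) := by
  simp [monAct, Finsupp.smul_single]

lemma aChi_apply (z : I →₀ K) :
    aChi γ χ u z = ((u⁻¹ : Kˣ) : K) • ∑ σ : W, (((χ σ)⁻¹ : Kˣ) : K) • monAct γ σ z := by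
  simp [aChi, LinearMap.sum_apply]

open Classical in
lemma aChi_single_coeff (i k : I) :
    aChi γ χ u (Finsupp.single i (1:K)) k
      = ((u⁻¹ : Kˣ) : K) * ∑ σ : W,
        (if σ • i = k then (((χ σ)⁻¹ : Kˣ) : K) * ((γ i σ : Kˣ) : K) else 0) := by
  rw [aChi_apply, Finsupp.smul_apply, Finsupp.finset_sum_apply, smul_eq_mul]
  congr 1
  refine Finset.sum_congr rfl fun σ _ => ?_
  rw [monAct_single, Finsupp.smul_apply, Finsupp.single_apply, mul_one, smul_eq_mul,
    mul_ite, mul_zero]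


variable (hγ : ∀ (i : I) (σ τ : W), γ i (σ * τ) = γ (τ • i) σ * γ i τ)

include hγ

lemma gamma_one (i : I) : γ i 1 = 1 := by
  have h := hγ i 1 1
  simp only [one_mul, one_smul] at h
  exact (mul_eq_left.mp h.symm)

lemma monAct_monAct (σ τ : W) (z : I →₀ K) :
    monAct γ σ (monAct γ τ z) = monAct γ (σ * τ) z := by
  induction z using Finsupp.induction_linear with
  | zero => simp
  | add a b ha hb => simp [map_add, ha, hb]
  | single i c =>
    rw [monAct_single, monAct_single, monAct_single, hγ i σ τ, mul_smul]
    push_cast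
    ring_nf

lemma monAct_aChi (σ : W) (z : I →₀ K) :
    monAct γ σ (aChi γ χ u z) = ((χ σ : Kˣ) : K) • aChi γ χ u z := by
  rw [aChi_apply]
  simp only [map_smul, map_sum, Finset.smul_sum, smul_smul, monAct_monAct γ hγ]
  refine Fintype.sum_equiv (Equiv.mulLeft σ) _ _ (fun τ => ?_)
  simp only [Equiv.coe_mulLeft]
  congr 1
  push_cast [map_mul]
  simp only [mul_inv, Units.val_mul]
  linear_combination (-(((u⁻¹ : Kˣ) : K) * (((χ τ)⁻¹ : Kˣ) : K))) * Units.mul_inv (χ σ)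

lemma aChi_monAct (σ : W) (z : I →₀ K) :
    aChi γ χ u (monAct γ σ z) = ((χ σ : Kˣ) : K) • aChi γ χ u z := by
  rw [aChi_apply γ χ u (monAct γ σ z), aChi_apply γ χ u z]
  simp only [Finset.smul_sum, smul_smul, monAct_monAct γ hγ]
  refine Fintype.sum_equiv (Equiv.mulRight σ) _ _ (fun τ => ?_)
  simp only [Equiv.coe_mulRight]
  congr 1
  push_cast [map_mul]
  simp only [mul_inv, Units.val_mul]
  linear_combination (-(((u⁻¹ : Kˣ) : K) * (((χ τ)⁻¹ : Kˣ) : K))) * Units.mul_inv (χ σ)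


lemma aChi_apply_fixed (hu : ((u : Kˣ) : K) = (Fintype.card W : K))
    (z : I →₀ K) (hz : z ∈ chiFixSub γ χ) : aChi γ χ u z = z := by
  have hz' : ∀ σ : W, monAct γ σ z = ((χ σ : Kˣ) : K) • z := hz
  rw [aChi_apply]
  simp only [hz', smul_smul]
  have : ∀ σ : W, (((χ σ)⁻¹ : Kˣ) : K) * ((χ σ : Kˣ) : K) = 1 := by
    intro σ; rw [← Units.val_mul, inv_mul_cancel, Units.val_one]
  simp only [this, one_smul, Finset.sum_const, Finset.card_univ, smul_smul]
  rw [← Nat.cast_smul_eq_nsmul K, smul_smul, ← hu, ← Units.val_mul, inv_mul_cancel,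
    Units.val_one, one_smul]

lemma aChi_mem_fix (z : I →₀ K) : aChi γ χ u z ∈ chiFixSub γ χ :=
  fun σ => monAct_aChi γ χ u hγ σ z

lemma aChi_diff_zero (x : (I →₀ K)) (hx : x ∈ chiDiffSub γ χ) : aChi γ χ u x = 0 := by
  refine Submodule.span_induction ?_ (map_zero _) ?_ ?_ hx
  · rintro x ⟨σ, z, rfl⟩
    rw [map_sub, map_smul, aChi_monAct γ χ u hγ, sub_self]
  · intro x y _ _ hx hy
    rw [map_add, hx, hy, add_zero]
  · intro c x _ hx
    rw [map_smul, hx, smul_zero]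

lemma sub_aChi_mem (hu : ((u : Kˣ) : K) = (Fintype.card W : K)) (z : I →₀ K) :
    z - aChi γ χ u z ∈ chiDiffSub γ χ := by
  have key : z - aChi γ χ u z
      = ((u⁻¹ : Kˣ) : K) • ∑ σ : W,
        (((χ σ)⁻¹ : Kˣ) : K) • (((χ σ : Kˣ) : K) • z - monAct γ σ z) := by
    rw [aChi_apply]
    simp only [smul_sub, smul_smul, Finset.sum_sub_distrib, smul_sub]
    have : ∀ σ : W, (((χ σ)⁻¹ : Kˣ) : K) * ((χ σ : Kˣ) : K) = 1 := by
      intro σ; rw [← Units.val_mul, inv_mul_cancel, Units.val_one]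
    simp only [this, one_smul, Finset.sum_const, Finset.card_univ]
    rw [← Nat.cast_smul_eq_nsmul K, smul_smul, ← hu, ← Units.val_mul, inv_mul_cancel,
      Units.val_one, one_smul]
  rw [key]
  refine Submodule.smul_mem _ _ (Submodule.sum_mem _ fun σ _ => Submodule.smul_mem _ _ ?_)
  exact Submodule.subset_span ⟨σ, z, rfl⟩


open Classical in
lemma stab_sum (i k : I) (τ : W) (hτ : τ • i = k) :
    ∑ σ : W, (if σ • i = k then (((χ σ)⁻¹ : Kˣ) : K) * ((γ i σ : Kˣ) : K) else 0)
      = ((((χ τ)⁻¹ : Kˣ) : K) * ((γ i τ : Kˣ) : K)) *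
        ∑ ρ : MulAction.stabilizer W i, (((χ ρ)⁻¹ : Kˣ) : K) * ((γ i ρ : Kˣ) : K) := by
  set f : W → K := fun σ => (((χ σ)⁻¹ : Kˣ) : K) * ((γ i σ : Kˣ) : K) with hf
  set c : K := (((χ τ)⁻¹ : Kˣ) : K) * ((γ i τ : Kˣ) : K) with hc
  have step1 : ∑ σ : W, (if σ • i = k then f σ else 0)
      = ∑ σ : W, (if σ • i = i then f (τ * σ) else 0) := by
    refine (Fintype.sum_equiv (Equiv.mulLeft τ)
      (fun σ => if σ • i = i then f (τ * σ) else 0)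
      (fun σ => if σ • i = k then f σ else 0) (fun σ => ?_)).symm
    simp only [Equiv.coe_mulLeft]
    have : (τ * σ) • i = k ↔ σ • i = i := by
      rw [mul_smul, ← hτ]
      exact smul_left_cancel_iff τ
    simp only [this]
  have step2 : ∑ σ : W, (if σ • i = i then f (τ * σ) else 0)
      = ∑ σ : W, (if σ • i = i then c * f σ else 0) := by
    refine Finset.sum_congr rfl fun σ _ => ?_
    by_cases h : σ • i = i
    · simp only [if_pos h, hf, hc]
      have hγ' : γ i (τ * σ) = γ i τ * γ i σ := by
        rw [hγ i τ σ, h]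
      rw [hγ', map_mul, mul_inv]
      push_cast
      ring
    · rw [if_neg h, if_neg h]
  have step3 : ∑ σ : W, (if σ • i = i then f σ else 0)
      = ∑ ρ : MulAction.stabilizer W i, f ρ := by
    rw [← Finset.sum_filter]
    exact Finset.sum_subtype _ (by simp [MulAction.mem_stabilizer_iff]) f
  rw [step1, step2, ← step3, Finset.mul_sum]
  refine Finset.sum_congr rfl fun σ _ => ?_
  rw [mul_ite, mul_zero]


open Classical in
lemma stab_hom_sum_eq_zero [IsDomain K] (i : I) (hi : i ∉ Ichi γ χ) :
    ∑ ρ : MulAction.stabilizer W i, (((χ ρ)⁻¹ : Kˣ) : K) * ((γ i ρ : Kˣ) : K) = 0 := by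
  have hone : ∀ ρ : MulAction.stabilizer W i, γ i ((1 : MulAction.stabilizer W i) : W) = 1 :=
    fun _ => gamma_one γ hγ i
  set ψ : MulAction.stabilizer W i →* K :=
    { toFun := fun ρ => (((χ ρ)⁻¹ : Kˣ) : K) * ((γ i ρ : Kˣ) : K)
      map_one' := by
        simp only [Subgroup.coe_one, map_one, inv_one, Units.val_one, one_mul]
        rw [gamma_one γ hγ i, Units.val_one]
      map_mul' := by
        rintro ⟨ρ, hρ⟩ ⟨σ, hσ⟩
        simp only [Subgroup.coe_mul, MulMemClass.mk_mul_mk]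
        have hγ' : γ i (ρ * σ) = γ i ρ * γ i σ := by
          rw [hγ i ρ σ, MulAction.mem_stabilizer_iff.mp hσ]
        rw [hγ', map_mul, mul_inv]
        push_cast
        ring } with hψ
  have hψne : ψ ≠ 1 := by
    simp only [Set.mem_setOf_eq, Ichi, not_forall] at hi
    obtain ⟨σ₀, hσ₀, hne⟩ := hi
    intro hcontra
    apply hne
    have := congrArg (fun g => g (⟨σ₀, hσ₀⟩ : MulAction.stabilizer W i)) hcontra
    simp only [hψ, MonoidHom.coe_mk, OneHom.coe_mk, MonoidHom.one_apply] at this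
    have h2 : (((χ σ₀)⁻¹ * γ i σ₀ : Kˣ) : K) = ((1 : Kˣ) : K) := by
      push_cast
      simpa using this
    have h3 : (χ σ₀)⁻¹ * γ i σ₀ = 1 := Units.ext h2
    rw [inv_mul_eq_one] at h3
    exact h3.symm
  exact sum_hom_units_eq_zero ψ hψne

open Classical in
lemma stab_sum_of_mem (i : I) (hi : i ∈ Ichi γ χ) :
    ∑ ρ : MulAction.stabilizer W i, (((χ ρ)⁻¹ : Kˣ) : K) * ((γ i ρ : Kˣ) : K)
      = (Nat.card (MulAction.stabilizer W i) : K) := by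
  have h1 : ∀ ρ ∈ (Finset.univ : Finset (MulAction.stabilizer W i)),
      (((χ (ρ : W))⁻¹ : Kˣ) : K) * ((γ i (ρ : W) : Kˣ) : K) = 1 := by
    rintro ⟨ρ, hρ⟩ _
    rw [hi ρ (MulAction.mem_stabilizer_iff.mp hρ), ← Units.val_mul, inv_mul_cancel, Units.val_one]
  rw [Finset.sum_congr rfl h1, Finset.sum_const, Finset.card_univ, Nat.card_eq_fintype_card,
    nsmul_eq_mul, mul_one]

lemma aChi_single_eq_zero [IsDomain K] (i : I) (hi : i ∉ Ichi γ χ) :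
    aChi γ χ u (Finsupp.single i (1:K)) = 0 := by
  classical
  ext k
  rw [aChi_single_coeff, Finsupp.coe_zero, Pi.zero_apply]
  by_cases h : ∃ τ : W, τ • i = k
  · obtain ⟨τ, hτ⟩ := h
    rw [stab_sum γ χ hγ i k τ hτ, stab_hom_sum_eq_zero γ χ hγ i hi, mul_zero, mul_zero]
  · push_neg at h
    have : ∀ σ : W, (if σ • i = k then (((χ σ)⁻¹ : Kˣ) : K) * ((γ i σ : Kˣ) : K) else 0) = 0 :=
      fun σ => if_neg (h σ)
    rw [Finset.sum_congr rfl fun σ _ => this σ, Finset.sum_const, smul_zero, mul_zero]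

lemma aChi_single_self (i : I) (hi : i ∈ Ichi γ χ) :
    aChi γ χ u (Finsupp.single i (1:K)) i
      = ((u⁻¹ : Kˣ) : K) * (Nat.card (MulAction.stabilizer W i) : K) := by
  classical
  rw [aChi_single_coeff, stab_sum γ χ hγ i i 1 (one_smul W i),
    stab_sum_of_mem γ χ hγ i hi, map_one, inv_one, Units.val_one, gamma_one γ hγ i,
    Units.val_one, one_mul, one_mul]

lemma aChi_single_of_not_orbit (i k : I) (hk : k ∉ MulAction.orbit W i) :
    aChi γ χ u (Finsupp.single i (1:K)) k = 0 := by
  classical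
  rw [aChi_single_coeff]
  have : ∀ σ : W, (if σ • i = k then (((χ σ)⁻¹ : Kˣ) : K) * ((γ i σ : Kˣ) : K) else 0) = 0 := by
    intro σ
    refine if_neg fun hc => hk ?_
    exact hc ▸ MulAction.mem_orbit i σ
  rw [Finset.sum_congr rfl fun σ _ => this σ, Finset.sum_const, smul_zero, mul_zero]

lemma ichi_smul (τ : W) (i : I) (hi : i ∈ Ichi γ χ) : τ • i ∈ Ichi γ χ := by
  intro σ hσ
  set ρ : W := τ⁻¹ * σ * τ with hρdef
  have hρ : ρ • i = i := by
    rw [hρdef, mul_smul, mul_smul, hσ, inv_smul_smul]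
  have h1 : γ i (σ * τ) = γ (τ • i) σ * γ i τ := hγ i σ τ
  have h2 : σ * τ = τ * ρ := by
    rw [hρdef]
    group
  have h3 : γ i (τ * ρ) = γ i τ * γ i ρ := by
    rw [hγ i τ ρ, hρ]
  have h4 : γ (τ • i) σ * γ i τ = γ i τ * γ i ρ := by
    rw [← h1, h2, h3]
  have h5 : γ (τ • i) σ = γ i ρ := by
    have := h4.trans (mul_comm (γ i τ) (γ i ρ))
    exact mul_right_cancel this
  rw [h5, hi ρ hρ, hρdef]
  simp [map_mul]

lemma aChi_single_smul (τ : W) (i : I) :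
    aChi γ χ u (Finsupp.single (τ • i) (1:K))
      = (((χ τ) * (γ i τ)⁻¹ : Kˣ) : K) • aChi γ χ u (Finsupp.single i (1:K)) := by
  have h1 : monAct γ τ (Finsupp.single i (1:K))
      = ((γ i τ : Kˣ) : K) • Finsupp.single (τ • i) (1:K) := by
    rw [monAct_single, mul_one, Finsupp.smul_single, smul_eq_mul, mul_one]
  have h2 := aChi_monAct γ χ u hγ τ (Finsupp.single i (1:K))
  rw [h1, map_smul] at h2
  have h3 := congrArg (fun x => ((((γ i τ)⁻¹ : Kˣ)) : K) • x) h2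
  simp only [smul_smul] at h3
  rw [← Units.val_mul, inv_mul_cancel, Units.val_one, one_smul, ← Units.val_mul] at h3
  rw [h3, mul_comm]

end aux

/-- Theorem II.6 (ii) and (iii). If `K` is an integral
domain and `|W| ∈ U(K)`, then (ii) the family `(a_χ(e_j))_{j ∈ J(χ,M)}`
is a basis of `M_χ`, and (iii) the residue classes `(e_j mod _χM)_{j ∈ J(χ,M)}`
form a basis of `M/_χM`; here `J(χ,M) = I* ∩ I(χ,M)`. -/


theorem basis_of_chiFixSub_and_quotient {K : Type*} [CommRing K] [IsDomain K]
    {W : Type*} [Group W] [Fintype W] {I : Type*} [MulAction W I]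
    (γ : I → W → Kˣ) (hγ : ∀ (i : I) (σ τ : W), γ i (σ * τ) = γ (τ • i) σ * γ i τ)
    (χ : W →* Kˣ)
    (u : Kˣ) (hu : ((u : Kˣ) : K) = (Fintype.card W : K))
    (Istar : Set I)
    (hIstar : ∀ i : I, ∃! j, j ∈ Istar ∧ j ∈ MulAction.orbit W i)
    (w : {j : I // j ∈ Istar ∧ j ∈ Ichi γ χ} → (I →₀ K))
    (hw : w = fun j => aChi γ χ u (Finsupp.single j.1 1))
    (q : {j : I // j ∈ Istar ∧ j ∈ Ichi γ χ} → ((I →₀ K) ⧸ chiDiffSub γ χ))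
    (hq : q = fun j => Submodule.Quotient.mk (Finsupp.single j.1 1)) :
    (LinearIndependent K w ∧ Submodule.span K (Set.range w) = chiFixSub γ χ) ∧
    (LinearIndependent K q ∧ Submodule.span K (Set.range q) = ⊤) := by
  subst hw hq
  classical
  set J := {j : I // j ∈ Istar ∧ j ∈ Ichi γ χ}
  set w : J → (I →₀ K) := fun j => aChi γ χ u (Finsupp.single j.1 1) with hw
  set q : J → ((I →₀ K) ⧸ chiDiffSub γ χ) :=
    fun j => Submodule.Quotient.mk (Finsupp.single j.1 1) with hq
  -- the diagonal coefficient is nonzero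
  have hcoeff : ∀ i : I, i ∈ Ichi γ χ → aChi γ χ u (Finsupp.single i (1:K)) i ≠ 0 := by
    intro i hi
    rw [aChi_single_self γ χ u hγ i hi]
    refine mul_ne_zero (Units.ne_zero _) ?_
    intro h0
    have hfo : (MulAction.orbit W i).Finite := Set.finite_range _
    have hfo' : Fintype (MulAction.orbit W i) := hfo.fintype
    have hfs : Fintype (MulAction.stabilizer W i) := Fintype.ofFinite _
    have horb := MulAction.card_orbit_mul_card_stabilizer_eq_card_group W i
    have hcast : ((Fintype.card (MulAction.orbit W i) : K))
        * ((Fintype.card (MulAction.stabilizer W i) : K)) = ((Fintype.card W : K)) := by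
      rw [← Nat.cast_mul, horb]
    rw [Nat.card_eq_fintype_card] at h0
    rw [h0, mul_zero] at hcast
    exact (Units.ne_zero u) (by rw [hu, ← hcast])
  -- off-diagonal coefficients vanish
  have horth : ∀ j j' : J, j ≠ j' → (w j) j'.1 = 0 := by
    intro j j' hne
    refine aChi_single_of_not_orbit γ χ u hγ j.1 j'.1 fun horbit => hne ?_
    obtain ⟨x, -, huniq⟩ := hIstar j.1
    have e1 : j.1 = x := huniq j.1 ⟨j.2.1, MulAction.mem_orbit_self j.1⟩
    have e2 : j'.1 = x := huniq j'.1 ⟨j'.2.1, horbit⟩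
    exact Subtype.ext (e1.trans e2.symm)
  -- linear independence of w
  have hliw : LinearIndependent K w := by
    rw [linearIndependent_iff]
    intro l hl
    ext j0
    have happ := congrArg (fun v : I →₀ K => v j0.1) hl
    rw [Finsupp.linearCombination_apply] at happ
    simp only [Finsupp.coe_zero, Pi.zero_apply] at happ
    rw [Finsupp.sum_apply] at happ
    rw [Finsupp.sum, Finset.sum_eq_single j0 (fun j _ hjne => ?_) (fun hj0 => ?_)] at happ
    · rw [Finsupp.smul_apply, smul_eq_mul] at happ
      rcases mul_eq_zero.mp happ with h | h
      · simpa using h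
      · exact absurd h (hcoeff j0.1 j0.2.2)
    · rw [Finsupp.smul_apply, horth j j0 hjne, smul_zero]
    · rw [Finsupp.notMem_support_iff.mp hj0, zero_smul, Finsupp.coe_zero, Pi.zero_apply]
  -- each aChi(e_i) lies in the span of w
  have hsingle : ∀ (i : I) (c : K),
      aChi γ χ u (Finsupp.single i c) = c • aChi γ χ u (Finsupp.single i 1) := by
    intro i c
    rw [← map_smul, Finsupp.smul_single, smul_eq_mul, mul_one]
  have hkey : ∀ i : I, aChi γ χ u (Finsupp.single i (1:K)) ∈ Submodule.span K (Set.range w) := by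
    intro i
    by_cases hi : i ∈ Ichi γ χ
    · obtain ⟨x, ⟨hx1, hx2⟩, -⟩ := hIstar i
      obtain ⟨τ, hτ⟩ := hx2
      have hxchi : x ∈ Ichi γ χ := hτ ▸ ichi_smul γ χ hγ τ i hi
      have hi' : Finsupp.single i (1:K) = Finsupp.single (τ⁻¹ • x) 1 := by
        rw [← hτ, inv_smul_smul]
      rw [hi', aChi_single_smul γ χ u hγ τ⁻¹ x]
      exact Submodule.smul_mem _ _
        (Submodule.subset_span ⟨(⟨x, hx1, hxchi⟩ : J), rfl⟩)
    · rw [aChi_single_eq_zero γ χ u hγ i hi]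
      exact Submodule.zero_mem _
  have haChi_mem_span : ∀ z : I →₀ K, aChi γ χ u z ∈ Submodule.span K (Set.range w) := by
    intro z
    have hz : aChi γ χ u z = z.sum fun i c => c • aChi γ χ u (Finsupp.single i 1) := by
      conv_lhs => rw [← Finsupp.sum_single z]
      rw [map_finsuppSum]
      exact Finsupp.sum_congr fun i _ => hsingle i _
    rw [hz]
    exact Submodule.finsuppSum_mem _ _ _ _ fun i _ => Submodule.smul_mem _ _ (hkey i)
  -- span of w is the fixed submodule
  have hspanw : Submodule.span K (Set.range w) = chiFixSub γ χ := by
    apply le_antisymm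
    · rw [Submodule.span_le]
      rintro _ ⟨j, rfl⟩
      exact aChi_mem_fix γ χ u hγ _
    · intro z hz
      have hz' : z = aChi γ χ u z := (aChi_apply_fixed γ χ u hγ hu z hz).symm
      rw [hz']
      exact haChi_mem_span z
  -- the quotient map sends w j to q j
  have h4 : ∀ j : J, (chiDiffSub γ χ).mkQ (w j) = q j := by
    intro j
    rw [Submodule.mkQ_apply]
    refine (Submodule.Quotient.eq _).2 ?_
    exact neg_mem_iff.mp (by simpa using sub_aChi_mem γ χ u hγ hu (Finsupp.single j.1 1))
  -- linear independence of q
  have hliq : LinearIndependent K q := by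
    rw [linearIndependent_iff]
    intro l hl
    have h1 : Finsupp.linearCombination K q l
        = (chiDiffSub γ χ).mkQ
          (Finsupp.linearCombination K (fun j : J => Finsupp.single j.1 (1:K)) l) := by
      rw [Finsupp.apply_linearCombination]
      rfl
    rw [h1] at hl
    have h2 : Finsupp.linearCombination K (fun j : J => Finsupp.single j.1 (1:K)) l
        ∈ chiDiffSub γ χ := by
      rwa [← Submodule.Quotient.mk_eq_zero, ← Submodule.mkQ_apply]
    have h3 : aChi γ χ u
        (Finsupp.linearCombination K (fun j : J => Finsupp.single j.1 (1:K)) l) = 0 :=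
      aChi_diff_zero γ χ u hγ _ h2
    rw [Finsupp.apply_linearCombination] at h3
    exact linearIndependent_iff.mp hliw l h3
  -- span of q is everything
  have hspanq : Submodule.span K (Set.range q) = ⊤ := by
    rw [Submodule.eq_top_iff']
    intro x
    obtain ⟨z, rfl⟩ := Submodule.Quotient.mk_surjective _ x
    have h1 : (Submodule.Quotient.mk z : (I →₀ K) ⧸ chiDiffSub γ χ)
        = (chiDiffSub γ χ).mkQ (aChi γ χ u z) := by
      rw [Submodule.mkQ_apply]
      exact (Submodule.Quotient.eq _).2 (sub_aChi_mem γ χ u hγ hu z)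
    rw [h1]
    have h2 := Submodule.mem_map_of_mem (f := (chiDiffSub γ χ).mkQ) (haChi_mem_span z)
    rw [Submodule.map_span] at h2
    refine Submodule.span_mono ?_ h2
    rintro _ ⟨_, ⟨j, rfl⟩, rfl⟩
    exact ⟨j, (h4 j).symm⟩
  exact ⟨⟨hliw, hspanw⟩, ⟨hliq, hspanq⟩⟩
end
end
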